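/- arXiv:1411.6116 — 4 statements merged into one kernel-verified Lean document; each statement's English description precedes it below -/
import Mathlib

section
/- Let p ∈ ℕ with p ≥ 1 and r > 0. If f : ℝ → ℝ is nonnegative and measurable, then (∫₀^∞ (∫₀^x f(y) dy)^p x^{-r-1} dx)^{1/p} ≤ (p/r) (∫₀^∞ (y f(y))^p y^{-r-1} dy)^{1/p}. -/
open MeasureTheory Set ENNReal

lemma hardy_aux_Ioc {c x : ℝ} (hc : -1 < c) (hx : 0 < x) :
    ∫⁻ y in Ioc (0:ℝ) x, ENNReal.ofReal (y ^ c) = ENNReal.ofReal (x ^ (c + 1) / (c + 1)) := by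
  rw [← ofReal_integral_eq_lintegral_ofReal]
  · congr 1
    rw [← intervalIntegral.integral_of_le hx.le, integral_rpow (Or.inl hc),
      Real.zero_rpow (by linarith)]
    ring
  · exact (intervalIntegral.intervalIntegrable_rpow' hc).1
  · filter_upwards [ae_restrict_mem measurableSet_Ioc] with y hy using
      Real.rpow_nonneg hy.1.le c

lemma hardy_aux_Ioi {c y : ℝ} (hc : c < -1) (hy : 0 < y) :
    ∫⁻ x in Ioi y, ENNReal.ofReal (x ^ c) = ENNReal.ofReal (y ^ (c + 1) / (-(c + 1))) := by
  rw [← ofReal_integral_eq_lintegral_ofReal (integrableOn_Ioi_rpow_of_lt hc hy)]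
  · rw [integral_Ioi_rpow_of_lt hc hy]
    congr 1
    rw [div_neg, neg_div]
  · filter_upwards [ae_restrict_mem measurableSet_Ioi] with t ht using
      Real.rpow_nonneg ((hy.trans ht).le) c

lemma hardy_aux_swap (g : ℝ → ℝ≥0∞) (hg : Measurable g) {c : ℝ} (hc : c < -1) :
    ∫⁻ x in Ioi (0:ℝ), ENNReal.ofReal (x ^ c) * ∫⁻ y in Ioc (0:ℝ) x, g y
      = ∫⁻ y in Ioi (0:ℝ), g y * ENNReal.ofReal (y ^ (c + 1) / (-(c + 1))) := by
  set k : ℝ × ℝ → ℝ≥0∞ := fun q =>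
    {q : ℝ × ℝ | 0 < q.2 ∧ q.2 ≤ q.1}.indicator (fun q => ENNReal.ofReal (q.1 ^ c) * g q.2) q
    with hk_def
  have hS : MeasurableSet {q : ℝ × ℝ | 0 < q.2 ∧ q.2 ≤ q.1} :=
    (measurableSet_lt measurable_const measurable_snd).inter
      (measurableSet_le measurable_snd measurable_fst)
  have hkm : Measurable k :=
    (((measurable_fst.pow_const c).ennreal_ofReal.mul (hg.comp measurable_snd)).indicator hS)
  have h1 : ∀ x : ℝ, (∫⁻ y, k (x, y)) =
      (Ioi (0:ℝ)).indicator
        (fun x => ENNReal.ofReal (x ^ c) * ∫⁻ y in Ioc (0:ℝ) x, g y) x := by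
    intro x
    by_cases hx : x ∈ Ioi (0:ℝ)
    · rw [indicator_of_mem hx]
      have hky : ∀ y, k (x, y) =
          (Ioc (0:ℝ) x).indicator (fun y => ENNReal.ofReal (x ^ c) * g y) y := by
        intro y
        simp only [hk_def, indicator, mem_setOf_eq, mem_Ioc]
      simp_rw [hky]
      rw [lintegral_indicator measurableSet_Ioc,
        lintegral_const_mul' _ _ ofReal_ne_top]
    · rw [indicator_of_notMem hx]
      have hky : ∀ y, k (x, y) = 0 := by
        intro y
        apply indicator_of_notMem
        simp only [mem_setOf_eq, not_and]
        intro h1 h2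
        exact absurd (h1.trans_le h2) (by simpa using hx)
      simp [hky]
  have h2 : ∀ y : ℝ, (∫⁻ x, k (x, y)) =
      (Ioi (0:ℝ)).indicator
        (fun y => g y * ENNReal.ofReal (y ^ (c + 1) / (-(c + 1)))) y := by
    intro y
    by_cases hy : y ∈ Ioi (0:ℝ)
    · rw [indicator_of_mem hy]
      have hkx : ∀ x, k (x, y) =
          (Ici y).indicator (fun x => ENNReal.ofReal (x ^ c) * g y) x := by
        intro x
        simp only [hk_def, indicator, mem_setOf_eq, mem_Ici]
        by_cases h : y ≤ x
        · simp [h, mem_Ioi.mp hy]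
        · simp [h]
      simp_rw [hkx]
      have hm : Measurable fun a : ℝ => ENNReal.ofReal (a ^ c) :=
        (measurable_id.pow_const c).ennreal_ofReal
      rw [lintegral_indicator measurableSet_Ici, lintegral_mul_const'' _ hm.aemeasurable,
        ← setLIntegral_congr (Ioi_ae_eq_Ici (a := y)), hardy_aux_Ioi hc (mem_Ioi.mp hy),
        mul_comm]
    · rw [indicator_of_notMem hy]
      have hkx : ∀ x, k (x, y) = 0 := by
        intro x
        apply indicator_of_notMem
        simp only [mem_setOf_eq, not_and]
        intro h1
        exact absurd h1 (by simpa using hy)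
      simp [hkx]
  calc ∫⁻ x in Ioi (0:ℝ), ENNReal.ofReal (x ^ c) * ∫⁻ y in Ioc (0:ℝ) x, g y
      = ∫⁻ x, ∫⁻ y, k (x, y) := by
        rw [← lintegral_indicator measurableSet_Ioi]
        exact (lintegral_congr h1).symm
    _ = ∫⁻ y, ∫⁻ x, k (x, y) := lintegral_lintegral_swap hkm.aemeasurable
    _ = ∫⁻ y in Ioi (0:ℝ), g y * ENNReal.ofReal (y ^ (c + 1) / (-(c + 1))) := by
        rw [← lintegral_indicator measurableSet_Ioi]
        exact lintegral_congr h2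


lemma hardy_aux_holder (p : ℕ) (hp : 1 ≤ p) (f : ℝ → ℝ) (hf : Measurable f)
    (hfnn : ∀ x, 0 ≤ f x) (s a : ℝ) (hs0 : 0 < s)
    (ha : a * (p : ℝ) = (1 - s) * ((p : ℝ) - 1)) {x : ℝ} (hx : 0 < x) :
    (∫⁻ y in Ioc (0:ℝ) x, ENNReal.ofReal (f y)) ^ p
      ≤ (∫⁻ y in Ioc (0:ℝ) x, ENNReal.ofReal (f y * y ^ a) ^ p)
        * ENNReal.ofReal ((x ^ s / s) ^ ((p : ℝ) - 1)) := by
  have hP : (1:ℝ) ≤ (p:ℝ) := by exact_mod_cast hp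
  have hP0 : (0:ℝ) < (p:ℝ) := by linarith
  rcases eq_or_lt_of_le hP with hP1 | hP1
  · -- p = 1
    have hp1 : p = 1 := by exact_mod_cast hP1.symm
    have ha0 : a = 0 := by
      have := ha
      rw [← hP1] at this
      simpa using this
    subst hp1
    simp only [ha0, Real.rpow_zero, mul_one, pow_one, Nat.cast_one, sub_self,
      ENNReal.ofReal_one]
    exact le_refl _
  · -- 1 < p
    set P : ℝ := (p : ℝ)
    set q : ℝ := P / (P - 1) with hqdef
    have hpq : P.HolderConjugate q := .conjExponent hP1
    have hq0 : q ≠ 0 := hpq.symm.ne_zero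
    have hP1' : P - 1 ≠ 0 := sub_ne_zero.mpr hP1.ne'
    have haq : a * q = 1 - s := by
      rw [hqdef]
      field_simp
      linear_combination ha
    have h0 : (∫⁻ y in Ioc (0:ℝ) x, ENNReal.ofReal (f y))
        = ∫⁻ y in Ioc (0:ℝ) x,
            ENNReal.ofReal (f y * y ^ a) * ENNReal.ofReal (y ^ (-a)) := by
      apply setLIntegral_congr_fun measurableSet_Ioc
      intro y hy
      dsimp only
      rw [← ENNReal.ofReal_mul (mul_nonneg (hfnn y) (Real.rpow_nonneg hy.1.le a)),
        mul_assoc, ← Real.rpow_add hy.1, add_neg_cancel, Real.rpow_zero, mul_one]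
    have hφ : AEMeasurable (fun y : ℝ => ENNReal.ofReal (f y * y ^ a))
        (volume.restrict (Ioc (0:ℝ) x)) :=
      ((hf.mul (measurable_id.pow_const a)).ennreal_ofReal).aemeasurable
    have hψ : AEMeasurable (fun y : ℝ => ENNReal.ofReal (y ^ (-a)))
        (volume.restrict (Ioc (0:ℝ) x)) :=
      ((measurable_id.pow_const (-a)).ennreal_ofReal).aemeasurable
    have hH := ENNReal.lintegral_mul_le_Lp_mul_Lq (volume.restrict (Ioc (0:ℝ) x)) hpq hφ hψ
    simp only [Pi.mul_apply] at hH
    rw [← h0] at hH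
    -- compute the second factor
    have h2 : (∫⁻ y in Ioc (0:ℝ) x, ENNReal.ofReal (y ^ (-a)) ^ q)
        = ENNReal.ofReal (x ^ s / s) := by
      have : (∫⁻ y in Ioc (0:ℝ) x, ENNReal.ofReal (y ^ (-a)) ^ q)
          = ∫⁻ y in Ioc (0:ℝ) x, ENNReal.ofReal (y ^ (s - 1)) := by
        apply setLIntegral_congr_fun measurableSet_Ioc
        intro y hy
        dsimp only
        rw [ENNReal.ofReal_rpow_of_pos (Real.rpow_pos_of_pos hy.1 _),
          ← Real.rpow_mul hy.1.le]
        congr 1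
        rw [neg_mul, haq]
        ring
      rw [this, hardy_aux_Ioc (by linarith) hx, sub_add_cancel]
    rw [h2] at hH
    -- also rewrite the P-power as natural power in hH
    have h1 : (∫⁻ y in Ioc (0:ℝ) x, ENNReal.ofReal (f y * y ^ a) ^ P)
        = ∫⁻ y in Ioc (0:ℝ) x, ENNReal.ofReal (f y * y ^ a) ^ p := by
      apply lintegral_congr
      intro y
      rw [← ENNReal.rpow_natCast]
    rw [h1] at hH
    calc (∫⁻ y in Ioc (0:ℝ) x, ENNReal.ofReal (f y)) ^ p
        ≤ ((∫⁻ y in Ioc (0:ℝ) x, ENNReal.ofReal (f y * y ^ a) ^ p) ^ (1/P)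
            * ENNReal.ofReal (x ^ s / s) ^ (1/q)) ^ p := by
          exact pow_le_pow_left' hH p
      _ = (∫⁻ y in Ioc (0:ℝ) x, ENNReal.ofReal (f y * y ^ a) ^ p)
            * ENNReal.ofReal ((x ^ s / s) ^ (P - 1)) := by
          rw [← ENNReal.rpow_natCast _ p, ENNReal.mul_rpow_of_nonneg _ _ hP0.le,
            ← ENNReal.rpow_mul, ← ENNReal.rpow_mul,
            one_div_mul_cancel hP0.ne', ENNReal.rpow_one]
          congr 1
          have hq1 : 1 / q * P = P - 1 := by
            rw [hqdef, one_div_div, div_mul_cancel₀ _ hP0.ne']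
          rw [hq1, ← ENNReal.ofReal_rpow_of_pos (div_pos (Real.rpow_pos_of_pos hx s) hs0)]
/-- Hardy's inequality, first form. -/
theorem hardy_first (p : ℕ) (hp : 1 ≤ p) (r : ℝ) (hr : 0 < r)
    (f : ℝ → ℝ) (hf : Measurable f) (hfnn : ∀ x, 0 ≤ f x) :
    (∫⁻ x in Ioi (0:ℝ),
        (∫⁻ y in Ioc (0:ℝ) x, ENNReal.ofReal (f y)) ^ p * ENNReal.ofReal (x ^ (-r - 1)))
      ^ (1 / (p : ℝ))
    ≤ ENNReal.ofReal ((p : ℝ) / r) *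
      (∫⁻ y in Ioi (0:ℝ),
        ENNReal.ofReal (y * f y) ^ p * ENNReal.ofReal (y ^ (-r - 1))) ^ (1 / (p : ℝ)) := by
  have hP : (1:ℝ) ≤ (p:ℝ) := by exact_mod_cast hp
  have hP0 : (0:ℝ) < (p:ℝ) := by linarith
  set P : ℝ := (p : ℝ) with hPdef
  set s : ℝ := r / P with hsdef
  have hs0 : 0 < s := div_pos hr hP0
  have hsP : s * P = r := div_mul_cancel₀ r hP0.ne'
  set a : ℝ := (1 - s) * (P - 1) / P with hadef
  have haP : a * P = (1 - s) * (P - 1) := div_mul_cancel₀ _ hP0.ne'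
  set g : ℝ → ℝ≥0∞ := fun y => ENNReal.ofReal (f y * y ^ a) ^ p with hgdef
  have hgm : Measurable g := ((hf.mul (measurable_id.pow_const a)).ennreal_ofReal).pow_const p
  set I : ℝ≥0∞ := ∫⁻ y in Ioi (0:ℝ),
      ENNReal.ofReal (y * f y) ^ p * ENNReal.ofReal (y ^ (-r - 1)) with hIdef
  have main : (∫⁻ x in Ioi (0:ℝ),
        (∫⁻ y in Ioc (0:ℝ) x, ENNReal.ofReal (f y)) ^ p * ENNReal.ofReal (x ^ (-r - 1)))
      ≤ ENNReal.ofReal ((1 / s) ^ P) * I := by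
    have step1 : (∫⁻ x in Ioi (0:ℝ),
          (∫⁻ y in Ioc (0:ℝ) x, ENNReal.ofReal (f y)) ^ p * ENNReal.ofReal (x ^ (-r - 1)))
        ≤ ∫⁻ x in Ioi (0:ℝ),
            ENNReal.ofReal ((1 / s) ^ (P - 1))
              * (ENNReal.ofReal (x ^ (-s - 1)) * ∫⁻ y in Ioc (0:ℝ) x, g y) := by
      apply setLIntegral_mono' measurableSet_Ioi
      intro x hx
      rw [mem_Ioi] at hx
      calc (∫⁻ y in Ioc (0:ℝ) x, ENNReal.ofReal (f y)) ^ p * ENNReal.ofReal (x ^ (-r - 1))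
          ≤ ((∫⁻ y in Ioc (0:ℝ) x, g y) * ENNReal.ofReal ((x ^ s / s) ^ (P - 1)))
              * ENNReal.ofReal (x ^ (-r - 1)) :=
            mul_le_mul_left (hardy_aux_holder p hp f hf hfnn s a hs0 haP hx) _
        _ = ENNReal.ofReal ((1 / s) ^ (P - 1))
              * (ENNReal.ofReal (x ^ (-s - 1)) * ∫⁻ y in Ioc (0:ℝ) x, g y) := by
            have hre : (x ^ s / s) ^ (P - 1) * x ^ (-r - 1)
                = (1 / s) ^ (P - 1) * x ^ (-s - 1) := by
              have e1 : (x ^ s / s) ^ (P - 1) = (1 / s) ^ (P - 1) * x ^ (s * (P - 1)) := by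
                rw [div_eq_mul_one_div,
                  Real.mul_rpow (Real.rpow_nonneg hx.le s) (by positivity),
                  ← Real.rpow_mul hx.le, mul_comm]
              rw [e1, mul_assoc, ← Real.rpow_add hx]
              congr 2
              linear_combination hsP
            rw [mul_assoc, ← ENNReal.ofReal_mul (Real.rpow_nonneg
              (div_nonneg (Real.rpow_nonneg hx.le s) hs0.le) _), hre,
              ENNReal.ofReal_mul (by positivity)]
            ring
    have step2 : (∫⁻ x in Ioi (0:ℝ),
          ENNReal.ofReal ((1 / s) ^ (P - 1))
            * (ENNReal.ofReal (x ^ (-s - 1)) * ∫⁻ y in Ioc (0:ℝ) x, g y))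
        = ENNReal.ofReal ((1 / s) ^ (P - 1))
          * ∫⁻ x in Ioi (0:ℝ), ENNReal.ofReal (x ^ (-s - 1)) * ∫⁻ y in Ioc (0:ℝ) x, g y :=
      lintegral_const_mul' _ _ ofReal_ne_top
    have step3 : (∫⁻ x in Ioi (0:ℝ), ENNReal.ofReal (x ^ (-s - 1)) * ∫⁻ y in Ioc (0:ℝ) x, g y)
        = ∫⁻ y in Ioi (0:ℝ), g y * ENNReal.ofReal (y ^ (-s) / s) := by
      rw [hardy_aux_swap g hgm (by linarith : -s - 1 < -1)]
      norm_num
    have step4 : (∫⁻ y in Ioi (0:ℝ), g y * ENNReal.ofReal (y ^ (-s) / s))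
        = ENNReal.ofReal (1 / s) * I := by
      rw [hIdef, ← lintegral_const_mul' _ _ ofReal_ne_top]
      apply setLIntegral_congr_fun measurableSet_Ioi
      intro y hy
      dsimp only
      rw [mem_Ioi] at hy
      have hfy : 0 ≤ f y * y ^ a := mul_nonneg (hfnn y) (Real.rpow_nonneg hy.le a)
      rw [hgdef]
      simp only
      rw [← ENNReal.ofReal_pow hfy, ← ENNReal.ofReal_pow (mul_nonneg hy.le (hfnn y)),
        ← ENNReal.ofReal_mul (pow_nonneg hfy p),
        ← ENNReal.ofReal_mul (pow_nonneg (mul_nonneg hy.le (hfnn y)) p),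
        ← ENNReal.ofReal_mul (by positivity : (0:ℝ) ≤ 1 / s)]
      congr 1
      have e2 : (y ^ a) ^ p = y ^ (a * P) := by
        rw [← Real.rpow_natCast (y ^ a) p, ← Real.rpow_mul hy.le]
      have e3 : (y:ℝ) ^ (p:ℕ) = y ^ P := (Real.rpow_natCast y p).symm
      have e4 : y ^ (a * P) * y ^ (-s) = y ^ P * y ^ (-r - 1) := by
        rw [← Real.rpow_add hy, ← Real.rpow_add hy]
        congr 1
        linear_combination haP - hsP
      rw [mul_pow, mul_pow, e2, e3]
      linear_combination (f y ^ p / s) * e4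
    calc (∫⁻ x in Ioi (0:ℝ),
          (∫⁻ y in Ioc (0:ℝ) x, ENNReal.ofReal (f y)) ^ p * ENNReal.ofReal (x ^ (-r - 1)))
        ≤ ENNReal.ofReal ((1 / s) ^ (P - 1))
            * (ENNReal.ofReal (1 / s) * I) := by
          rw [← step4, ← step3, ← step2]
          exact step1
      _ = ENNReal.ofReal ((1 / s) ^ P) * I := by
          rw [← mul_assoc, ← ENNReal.ofReal_mul (by positivity)]
          congr 2
          rw [← Real.rpow_add_one (by positivity : (1:ℝ)/s ≠ 0), sub_add_cancel]
  have h1p : (0:ℝ) ≤ 1 / P := by positivity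
  calc (∫⁻ x in Ioi (0:ℝ),
        (∫⁻ y in Ioc (0:ℝ) x, ENNReal.ofReal (f y)) ^ p * ENNReal.ofReal (x ^ (-r - 1)))
      ^ (1 / P)
      ≤ (ENNReal.ofReal ((1 / s) ^ P) * I) ^ (1 / P) := ENNReal.rpow_le_rpow main h1p
    _ = ENNReal.ofReal ((1 / s) ^ P) ^ (1 / P) * I ^ (1 / P) :=
        ENNReal.mul_rpow_of_nonneg _ _ h1p
    _ = ENNReal.ofReal (P / r) * I ^ (1 / P) := by
        rw [ENNReal.ofReal_rpow_of_pos (by positivity : (0:ℝ) < (1/s) ^ P)]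
        congr 2
        rw [← Real.rpow_mul (by positivity), mul_one_div, div_self hP0.ne',
          Real.rpow_one, hsdef, one_div_div]
end

section
/- Let p ∈ ℕ with p ≥ 1 and r > 0. If f : ℝ → ℝ is nonnegative and measurable, then (∫₀^∞ (∫_x^∞ f(y) dy)^p x^{r-1} dx)^{1/p} ≤ (p/r) (∫₀^∞ (y f(y))^p y^{r-1} dy)^{1/p}. -/
open MeasureTheory Set ENNReal

lemma swap_lemma (g : ℝ → ℝ → ℝ≥0∞) (hg : Measurable (Function.uncurry g)) :
    ∫⁻ x in Ioi (0:ℝ), ∫⁻ y in Ioi x, g x y = ∫⁻ y in Ioi (0:ℝ), ∫⁻ x in Ioo 0 y, g x y := by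
  have hG : Measurable (Function.uncurry fun x y => if x < y then g x y else 0) := by
    have : Function.uncurry (fun x y => if x < y then g x y else 0)
        = fun p : ℝ × ℝ => if p.1 < p.2 then Function.uncurry g p else 0 := rfl
    rw [this]
    exact Measurable.ite (measurableSet_lt measurable_fst measurable_snd) hg measurable_const
  calc ∫⁻ x in Ioi (0:ℝ), ∫⁻ y in Ioi x, g x y
      = ∫⁻ x in Ioi (0:ℝ), ∫⁻ y in Ioi (0:ℝ), (if x < y then g x y else 0) := by
        refine setLIntegral_congr_fun measurableSet_Ioi (fun x hx => ?_)
        have : (fun y => if x < y then g x y else 0) = (Ioi x).indicator (g x) := by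
          ext y; simp [indicator, mem_Ioi]
        rw [this, setLIntegral_indicator measurableSet_Ioi, Ioi_inter_Ioi,
          sup_eq_left.mpr (le_of_lt hx)]
    _ = ∫⁻ y in Ioi (0:ℝ), ∫⁻ x in Ioi (0:ℝ), (if x < y then g x y else 0) := by
        exact lintegral_lintegral_swap hG.aemeasurable
    _ = ∫⁻ y in Ioi (0:ℝ), ∫⁻ x in Ioo 0 y, g x y := by
        refine setLIntegral_congr_fun measurableSet_Ioi (fun y hy => ?_)
        have : (fun x => if x < y then g x y else 0) = (Iio y).indicator (fun x => g x y) := by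
          ext x; simp [indicator, mem_Iio]
        rw [this, setLIntegral_indicator measurableSet_Iio, Iio_inter_Ioi]

lemma lint_Ioo (c y : ℝ) (hc : -1 < c) (hy : 0 < y) :
    ∫⁻ x in Ioo (0:ℝ) y, ENNReal.ofReal (x ^ c) = ENNReal.ofReal (y ^ (c+1) / (c+1)) := by
  have hint : IntegrableOn (fun x : ℝ => x ^ c) (Ioo 0 y) := by
    have := (intervalIntegral.intervalIntegrable_rpow' hc (a := 0) (b := y))
    rw [intervalIntegrable_iff_integrableOn_Ioc_of_le hy.le] at this
    exact this.mono_set Ioo_subset_Ioc_self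
  rw [← ofReal_integral_eq_lintegral_ofReal hint]
  · congr 1
    rw [← integral_Ioc_eq_integral_Ioo, ← intervalIntegral.integral_of_le hy.le,
      integral_rpow (Or.inl hc)]
    rw [Real.zero_rpow (by linarith)]
    ring
  · filter_upwards [ae_restrict_mem measurableSet_Ioo] with x hx
    exact Real.rpow_nonneg hx.1.le c

lemma lint_Ioi (c x : ℝ) (hc : c < -1) (hx : 0 < x) :
    ∫⁻ y in Ioi x, ENNReal.ofReal (y ^ c) = ENNReal.ofReal (x ^ (c+1) / (-(c+1))) := by
  rw [← ofReal_integral_eq_lintegral_ofReal (integrableOn_Ioi_rpow_of_lt hc hx)]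
  · rw [integral_Ioi_rpow_of_lt hc hx, div_neg, neg_div]
  · filter_upwards [ae_restrict_mem measurableSet_Ioi] with y hy
    exact Real.rpow_nonneg (hx.trans hy).le c

/-- Hardy's inequality, second form. -/
theorem hardy_second (p : ℕ) (hp : 1 ≤ p) (r : ℝ) (hr : 0 < r)
    (f : ℝ → ℝ) (hf : Measurable f) (hfnn : ∀ x, 0 ≤ f x) :
    (∫⁻ x in Ioi (0:ℝ),
        (∫⁻ y in Ioi x, ENNReal.ofReal (f y)) ^ p * ENNReal.ofReal (x ^ (r - 1)))
      ^ (1 / (p : ℝ))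
    ≤ ENNReal.ofReal ((p : ℝ) / r) *
      (∫⁻ y in Ioi (0:ℝ),
        ENNReal.ofReal (y * f y) ^ p * ENNReal.ofReal (y ^ (r - 1))) ^ (1 / (p : ℝ)) := by
  have hpne : (p:ℝ) ≠ 0 := Nat.cast_ne_zero.mpr (by omega)
  have hppos : (0:ℝ) < p := by positivity
  -- rewrite RHS integrand
  have hB : (∫⁻ y in Ioi (0:ℝ), ENNReal.ofReal (y * f y) ^ p * ENNReal.ofReal (y ^ (r - 1)))
      = ∫⁻ y in Ioi (0:ℝ), ENNReal.ofReal (f y) ^ p * ENNReal.ofReal (y ^ ((p:ℝ) + r - 1)) := by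
    refine setLIntegral_congr_fun measurableSet_Ioi (fun y hy => ?_)
    have hy : (0:ℝ) < y := hy
    have h1 : y ^ ((p:ℝ) + r - 1) = y ^ p * y ^ (r - 1) := by
      rw [show (p:ℝ) + r - 1 = (p:ℝ) + (r - 1) by ring, Real.rpow_add hy, Real.rpow_natCast]
    have h2 : ENNReal.ofReal (y ^ p * y ^ (r-1))
        = ENNReal.ofReal y ^ p * ENNReal.ofReal (y^(r-1)) := by
      rw [ENNReal.ofReal_mul (by positivity), ENNReal.ofReal_pow hy.le]
    rw [h1, h2, ENNReal.ofReal_mul hy.le, mul_pow]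
    ring
  rw [hB]
  -- the key inequality
  have key : (∫⁻ x in Ioi (0:ℝ),
        (∫⁻ y in Ioi x, ENNReal.ofReal (f y)) ^ p * ENNReal.ofReal (x ^ (r - 1)))
      ≤ ENNReal.ofReal ((p : ℝ) / r) ^ p *
        ∫⁻ y in Ioi (0:ℝ), ENNReal.ofReal (f y) ^ p * ENNReal.ofReal (y ^ ((p:ℝ) + r - 1)) := by
    rcases eq_or_lt_of_le hp with hp1 | hp2
    · -- case p = 1
      obtain rfl : p = 1 := hp1.symm
      refine le_of_eq ?_
      calc ∫⁻ x in Ioi (0:ℝ), (∫⁻ y in Ioi x, ENNReal.ofReal (f y)) ^ 1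
              * ENNReal.ofReal (x ^ (r - 1))
          = ∫⁻ x in Ioi (0:ℝ), ∫⁻ y in Ioi x,
              ENNReal.ofReal (f y) * ENNReal.ofReal (x ^ (r - 1)) := by
            refine setLIntegral_congr_fun measurableSet_Ioi (fun x hx => ?_)
            rw [pow_one, ← lintegral_mul_const' _ _ ENNReal.ofReal_ne_top]
        _ = ∫⁻ y in Ioi (0:ℝ), ∫⁻ x in Ioo 0 y,
              ENNReal.ofReal (f y) * ENNReal.ofReal (x ^ (r - 1)) := by
            refine swap_lemma _ ?_
            fun_prop
        _ = ∫⁻ y in Ioi (0:ℝ), ENNReal.ofReal (f y) * ENNReal.ofReal (y ^ r / r) := by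
            refine setLIntegral_congr_fun measurableSet_Ioi (fun y hy => ?_)
            rw [lintegral_const_mul' _ _ ENNReal.ofReal_ne_top,
              lint_Ioo (r-1) y (by linarith) hy, sub_add_cancel]
        _ = ENNReal.ofReal ((1:ℕ) / r) ^ 1 * ∫⁻ y in Ioi (0:ℝ),
              ENNReal.ofReal (f y) ^ 1 * ENNReal.ofReal (y ^ ((1:ℕ) + r - 1)) := by
            rw [pow_one, ← lintegral_const_mul' _ _ ENNReal.ofReal_ne_top]
            refine setLIntegral_congr_fun measurableSet_Ioi (fun y hy => ?_)
            have hy : (0:ℝ) < y := hy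
            rw [pow_one, show ((1:ℕ):ℝ) + r - 1 = r by push_cast; ring]
            rw [show y ^ r / r = (((1:ℕ):ℝ)/r) * y ^ r by push_cast; ring,
              ENNReal.ofReal_mul (by positivity)]
            ring
    · -- case 2 ≤ p
      have hP1 : (1:ℝ) < p := by exact_mod_cast hp2
      have hP1pos : (0:ℝ) < (p:ℝ) - 1 := by linarith
      set q : ℝ := (p:ℝ)/((p:ℝ)-1) with hqdef
      have hpq : ((p:ℝ)).HolderConjugate q := by
        exact Real.HolderConjugate.conjExponent hP1
      set b : ℝ := ((p:ℝ)-1)*((p:ℝ)+r)/(p:ℝ) with hbdef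
      set β : ℝ := b/(p:ℝ) with hβdef
      set G : ℝ → ℝ≥0∞ := fun x => ∫⁻ y in Ioi x,
        ENNReal.ofReal (f y) ^ p * ENNReal.ofReal (y ^ b) with hGdef
      -- pointwise Hölder bound
      have pointwise : ∀ x ∈ Ioi (0:ℝ),
          (∫⁻ y in Ioi x, ENNReal.ofReal (f y)) ^ p * ENNReal.ofReal (x ^ (r - 1))
          ≤ ENNReal.ofReal (((p:ℝ)/r) ^ ((p:ℝ)-1)) *
            (G x * ENNReal.ofReal (x ^ (r/(p:ℝ) - 1))) := by
        intro x hx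
        have hx : (0:ℝ) < x := hx
        have hsplit : ∫⁻ y in Ioi x, ENNReal.ofReal (f y)
            = ∫⁻ y in Ioi x, ((fun y => ENNReal.ofReal (f y) * ENNReal.ofReal (y ^ β)) *
                (fun y => ENNReal.ofReal (y ^ (-β)))) y := by
          refine setLIntegral_congr_fun measurableSet_Ioi (fun y hy => ?_)
          have hy : 0 < y := hx.trans hy
          simp only [Pi.mul_apply]
          rw [mul_assoc, ← ENNReal.ofReal_mul (Real.rpow_nonneg hy.le _),
            ← Real.rpow_add hy, add_neg_cancel, Real.rpow_zero, ofReal_one, mul_one]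
        have hGx : ∫⁻ y in Ioi x,
            (ENNReal.ofReal (f y) * ENNReal.ofReal (y ^ β)) ^ ((p:ℝ)) = G x := by
          refine setLIntegral_congr_fun measurableSet_Ioi (fun y hy => ?_)
          have hy : 0 < y := hx.trans hy
          rw [ENNReal.mul_rpow_of_nonneg _ _ (by positivity), ENNReal.rpow_natCast,
            ENNReal.ofReal_rpow_of_pos (Real.rpow_pos_of_pos hy _),
            ← Real.rpow_mul hy.le, show β * (p:ℝ) = b from by
              rw [hβdef]; exact div_mul_cancel₀ b hpne]
        have hW : ∫⁻ y in Ioi x, (ENNReal.ofReal (y ^ (-β))) ^ q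
            = ENNReal.ofReal ((p:ℝ)/r * x ^ (-(r/(p:ℝ)))) := by
          have he : ∀ y ∈ Ioi x,
              (ENNReal.ofReal (y ^ (-β))) ^ q = ENNReal.ofReal (y ^ (-(1+r/(p:ℝ)))) := by
            intro y hy
            have hy : 0 < y := hx.trans hy
            rw [ENNReal.ofReal_rpow_of_pos (Real.rpow_pos_of_pos hy _), ← Real.rpow_mul hy.le]
            congr 1
            rw [hβdef, hbdef, hqdef]
            congr 1
            field_simp [hpne, hP1pos.ne']
          rw [setLIntegral_congr_fun measurableSet_Ioi he,
            lint_Ioi _ x (by nlinarith [div_pos hr hppos]) hx]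
          congr 1
          rw [show -(1+r/(p:ℝ)) + 1 = -(r/(p:ℝ)) by ring, neg_neg, div_eq_mul_inv, inv_div,
            mul_comm]
        have holder := ENNReal.lintegral_mul_le_Lp_mul_Lq (volume.restrict (Ioi x)) hpq
          (by fun_prop : Measurable fun y => ENNReal.ofReal (f y) * ENNReal.ofReal (y ^ β)).aemeasurable
          (by fun_prop : Measurable fun y : ℝ => ENNReal.ofReal (y ^ (-β))).aemeasurable
        rw [← hsplit, hGx, hW] at holder
        have h1 : (∫⁻ y in Ioi x, ENNReal.ofReal (f y)) ^ p
            ≤ G x * ENNReal.ofReal ((p:ℝ)/r * x ^ (-(r/(p:ℝ)))) ^ ((p:ℝ)-1) := by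
          calc (∫⁻ y in Ioi x, ENNReal.ofReal (f y)) ^ p
              ≤ (G x ^ (1/(p:ℝ)) * ENNReal.ofReal ((p:ℝ)/r * x ^ (-(r/(p:ℝ)))) ^ (1/q)) ^ p :=
                pow_le_pow_left₀ zero_le holder p
            _ = G x * ENNReal.ofReal ((p:ℝ)/r * x ^ (-(r/(p:ℝ)))) ^ ((p:ℝ)-1) := by
                rw [mul_pow, ← ENNReal.rpow_natCast (G x ^ (1/(p:ℝ))) p, ← ENNReal.rpow_mul,
                  one_div, inv_mul_cancel₀ hpne, ENNReal.rpow_one,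
                  ← ENNReal.rpow_natCast (_ ^ (1/q)) p, ← ENNReal.rpow_mul,
                  show 1/q * (p:ℝ) = (p:ℝ) - 1 by rw [hqdef]; field_simp]
        calc (∫⁻ y in Ioi x, ENNReal.ofReal (f y)) ^ p * ENNReal.ofReal (x ^ (r - 1))
            ≤ (G x * ENNReal.ofReal ((p:ℝ)/r * x ^ (-(r/(p:ℝ)))) ^ ((p:ℝ)-1)) *
              ENNReal.ofReal (x ^ (r - 1)) := mul_le_mul_left h1 _
          _ = ENNReal.ofReal (((p:ℝ)/r) ^ ((p:ℝ)-1)) *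
              (G x * ENNReal.ofReal (x ^ (r/(p:ℝ) - 1))) := by
              have e1 : ENNReal.ofReal ((p:ℝ)/r * x ^ (-(r/(p:ℝ)))) ^ ((p:ℝ)-1)
                  = ENNReal.ofReal (((p:ℝ)/r) ^ ((p:ℝ)-1)) *
                    ENNReal.ofReal (x ^ (-(r/(p:ℝ)) * ((p:ℝ)-1))) := by
                rw [ENNReal.ofReal_rpow_of_pos (by positivity),
                  Real.mul_rpow (by positivity) (by positivity), ← Real.rpow_mul hx.le,
                  ENNReal.ofReal_mul (by positivity)]
              have e2 : ENNReal.ofReal (x ^ (-(r/(p:ℝ)) * ((p:ℝ)-1))) *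
                    ENNReal.ofReal (x ^ (r-1)) = ENNReal.ofReal (x ^ (r/(p:ℝ) - 1)) := by
                rw [← ENNReal.ofReal_mul (by positivity), ← Real.rpow_add hx]
                congr 1
                field_simp [hpne]
                ring
              rw [e1, show G x * (ENNReal.ofReal (((p:ℝ)/r) ^ ((p:ℝ)-1)) *
                    ENNReal.ofReal (x ^ (-(r/(p:ℝ)) * ((p:ℝ)-1)))) * ENNReal.ofReal (x ^ (r-1))
                  = ENNReal.ofReal (((p:ℝ)/r) ^ ((p:ℝ)-1)) *
                    (G x * (ENNReal.ofReal (x ^ (-(r/(p:ℝ)) * ((p:ℝ)-1))) *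
                      ENNReal.ofReal (x ^ (r-1)))) from by ring, e2]
      -- integrate the pointwise bound and apply Tonelli
      calc ∫⁻ x in Ioi (0:ℝ),
            (∫⁻ y in Ioi x, ENNReal.ofReal (f y)) ^ p * ENNReal.ofReal (x ^ (r - 1))
          ≤ ∫⁻ x in Ioi (0:ℝ), ENNReal.ofReal (((p:ℝ)/r) ^ ((p:ℝ)-1)) *
              (G x * ENNReal.ofReal (x ^ (r/(p:ℝ) - 1))) := by
            refine lintegral_mono_ae ?_
            filter_upwards [ae_restrict_mem measurableSet_Ioi] with x hx using pointwise x hx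
        _ = ENNReal.ofReal (((p:ℝ)/r) ^ ((p:ℝ)-1)) *
            ∫⁻ x in Ioi (0:ℝ), G x * ENNReal.ofReal (x ^ (r/(p:ℝ) - 1)) :=
            lintegral_const_mul' _ _ ENNReal.ofReal_ne_top
        _ = ENNReal.ofReal (((p:ℝ)/r) ^ ((p:ℝ)-1)) *
            ∫⁻ x in Ioi (0:ℝ), ∫⁻ y in Ioi x,
              (ENNReal.ofReal (f y) ^ p * ENNReal.ofReal (y ^ b)) *
                ENNReal.ofReal (x ^ (r/(p:ℝ) - 1)) := by
            congr 1
            refine setLIntegral_congr_fun measurableSet_Ioi (fun x hx => ?_)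
            rw [← lintegral_mul_const' _ _ ENNReal.ofReal_ne_top]
        _ = ENNReal.ofReal (((p:ℝ)/r) ^ ((p:ℝ)-1)) *
            ∫⁻ y in Ioi (0:ℝ), ∫⁻ x in Ioo 0 y,
              (ENNReal.ofReal (f y) ^ p * ENNReal.ofReal (y ^ b)) *
                ENNReal.ofReal (x ^ (r/(p:ℝ) - 1)) := by
            congr 1
            refine swap_lemma _ ?_
            fun_prop
        _ = ENNReal.ofReal (((p:ℝ)/r) ^ ((p:ℝ)-1)) *
            ∫⁻ y in Ioi (0:ℝ),
              (ENNReal.ofReal (f y) ^ p * ENNReal.ofReal (y ^ b)) *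
                (ENNReal.ofReal ((p:ℝ)/r) * ENNReal.ofReal (y ^ (r/(p:ℝ)))) := by
            congr 1
            refine setLIntegral_congr_fun measurableSet_Ioi (fun y hy => ?_)
            have hy : (0:ℝ) < y := hy
            rw [lintegral_const_mul' _ _
                (ENNReal.mul_ne_top (ENNReal.pow_ne_top ENNReal.ofReal_ne_top)
                  ENNReal.ofReal_ne_top),
              lint_Ioo (r/(p:ℝ) - 1) y (by nlinarith [div_pos hr hppos]) hy,
              sub_add_cancel, show y ^ (r/(p:ℝ)) / (r/(p:ℝ))
                = ((p:ℝ)/r) * y ^ (r/(p:ℝ)) by rw [div_eq_mul_inv, inv_div, mul_comm],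
              ENNReal.ofReal_mul (by positivity)]
        _ = ENNReal.ofReal ((p:ℝ)/r) ^ p *
            ∫⁻ y in Ioi (0:ℝ),
              ENNReal.ofReal (f y) ^ p * ENNReal.ofReal (y ^ ((p:ℝ) + r - 1)) := by
            rw [← lintegral_const_mul' _ _ ENNReal.ofReal_ne_top,
              ← lintegral_const_mul' _ _ (ENNReal.pow_ne_top ENNReal.ofReal_ne_top)]
            refine setLIntegral_congr_fun measurableSet_Ioi (fun y hy => ?_)
            have hy : (0:ℝ) < y := hy
            have hc : ENNReal.ofReal (((p:ℝ)/r) ^ ((p:ℝ)-1)) * ENNReal.ofReal ((p:ℝ)/r)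
                = ENNReal.ofReal ((p:ℝ)/r) ^ p := by
              rw [← ENNReal.ofReal_mul (by positivity), ← Real.rpow_add_one (by positivity),
                sub_add_cancel, Real.rpow_natCast, ENNReal.ofReal_pow (by positivity)]
            have hyy : ENNReal.ofReal (y ^ b) * ENNReal.ofReal (y ^ (r/(p:ℝ)))
                = ENNReal.ofReal (y ^ ((p:ℝ) + r - 1)) := by
              rw [← ENNReal.ofReal_mul (by positivity), ← Real.rpow_add hy]
              congr 1
              rw [hbdef]
              congr 1
              field_simp [hpne]
              ring
            calc ENNReal.ofReal (((p:ℝ)/r) ^ ((p:ℝ)-1)) *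
                  ((ENNReal.ofReal (f y) ^ p * ENNReal.ofReal (y ^ b)) *
                    (ENNReal.ofReal ((p:ℝ)/r) * ENNReal.ofReal (y ^ (r/(p:ℝ)))))
                = (ENNReal.ofReal (((p:ℝ)/r) ^ ((p:ℝ)-1)) * ENNReal.ofReal ((p:ℝ)/r)) *
                  (ENNReal.ofReal (f y) ^ p *
                    (ENNReal.ofReal (y ^ b) * ENNReal.ofReal (y ^ (r/(p:ℝ))))) := by ring
              _ = ENNReal.ofReal ((p:ℝ)/r) ^ p *
                  (ENNReal.ofReal (f y) ^ p * ENNReal.ofReal (y ^ ((p:ℝ) + r - 1))) := by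
                  rw [hc, hyy]
  calc (∫⁻ x in Ioi (0:ℝ),
        (∫⁻ y in Ioi x, ENNReal.ofReal (f y)) ^ p * ENNReal.ofReal (x ^ (r - 1))) ^ (1 / (p:ℝ))
      ≤ (ENNReal.ofReal ((p : ℝ) / r) ^ p *
        ∫⁻ y in Ioi (0:ℝ), ENNReal.ofReal (f y) ^ p * ENNReal.ofReal (y ^ ((p:ℝ) + r - 1)))
          ^ (1 / (p:ℝ)) := ENNReal.rpow_le_rpow key (by positivity)
    _ = ENNReal.ofReal ((p : ℝ) / r) *
        (∫⁻ y in Ioi (0:ℝ), ENNReal.ofReal (f y) ^ p * ENNReal.ofReal (y ^ ((p:ℝ) + r - 1)))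
          ^ (1 / (p:ℝ)) := by
        rw [ENNReal.mul_rpow_of_nonneg _ _ (by positivity), ← ENNReal.rpow_natCast _ p,
          ← ENNReal.rpow_mul, mul_one_div, div_self hpne, ENNReal.rpow_one]
end

section
/- Let φ : ℝ^{n-1} → ℝ be Lipschitz with Lipschitz constant M, and let Ω = {(x', x_n) ∈ ℝⁿ : x_n > φ(x')}. Then for every point (x', x_n) with x_n < φ(x'), one has dist((x', x_n), closure(Ω)) ≥ (φ(x') − x_n) / √(1 + M²). -/
open Set Metric

/-- Lower bound on the distance to the closure of a special Lipschitz domain. -/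
theorem infDist_ge_of_below_graph (m : ℕ) (M : NNReal)
    (φ : EuclideanSpace ℝ (Fin m) → ℝ) (hφ : LipschitzWith M φ)
    (Ω : Set (WithLp 2 (EuclideanSpace ℝ (Fin m) × ℝ)))
    (hΩ : Ω = {x | φ (WithLp.equiv 2 _ x).1 < (WithLp.equiv 2 _ x).2})
    (x : WithLp 2 (EuclideanSpace ℝ (Fin m) × ℝ))
    (hx : (WithLp.equiv 2 _ x).2 < φ (WithLp.equiv 2 _ x).1) :
    (φ (WithLp.equiv 2 _ x).1 - (WithLp.equiv 2 _ x).2) / Real.sqrt (1 + (M : ℝ) ^ 2)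
      ≤ infDist x (closure Ω) := by
  rw [Metric.infDist_closure]
  have hsqrt : (0:ℝ) < Real.sqrt (1 + (M : ℝ) ^ 2) := by
    apply Real.sqrt_pos.2; positivity
  by_contra h
  push_neg at h
  have hne : Ω.Nonempty := by
    refine ⟨(WithLp.equiv 2 _).symm ((WithLp.equiv 2 _ x).1, φ (WithLp.equiv 2 _ x).1 + 1), ?_⟩
    simp [hΩ]
  obtain ⟨y, hy, hdy⟩ := (Metric.infDist_lt_iff hne).1 h
  rw [hΩ] at hy
  have hyφ : φ (WithLp.equiv 2 _ y).1 < (WithLp.equiv 2 _ y).2 := hy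
  set a := dist x.fst y.fst with ha
  set b := dist x.snd y.snd with hb
  have hdist : dist x y = Real.sqrt (a ^ 2 + b ^ 2) := WithLp.prod_dist_eq_of_L2 x y
  have hlip : φ (WithLp.equiv 2 _ x).1 - φ (WithLp.equiv 2 _ y).1 ≤ (M : ℝ) * a := by
    have := hφ.dist_le_mul (WithLp.equiv 2 _ x).1 (WithLp.equiv 2 _ y).1
    have h2 : |φ (WithLp.equiv 2 _ x).1 - φ (WithLp.equiv 2 _ y).1| ≤ (M:ℝ) * a := by
      rw [← Real.dist_eq]; exact this
    exact le_trans (le_abs_self _) h2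
  have hbb : (WithLp.equiv 2 _ y).2 - (WithLp.equiv 2 _ x).2 ≤ b := by
    have : |(WithLp.equiv 2 _ x).2 - (WithLp.equiv 2 _ y).2| = b := rfl
    have := abs_sub_comm ((WithLp.equiv 2 _ x).2) ((WithLp.equiv 2 _ y).2) ▸ this
    calc (WithLp.equiv 2 _ y).2 - (WithLp.equiv 2 _ x).2
        ≤ |(WithLp.equiv 2 _ y).2 - (WithLp.equiv 2 _ x).2| := le_abs_self _
      _ = b := by rw [← this, abs_sub_comm]
  -- key: φx₁ - x₂ < M*a + b ≤ √(1+M²) * √(a²+b²)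
  have key : φ (WithLp.equiv 2 _ x).1 - (WithLp.equiv 2 _ x).2 < (M:ℝ) * a + b := by
    have : φ (WithLp.equiv 2 _ x).1 - (WithLp.equiv 2 _ x).2
        = (φ (WithLp.equiv 2 _ x).1 - φ (WithLp.equiv 2 _ y).1)
          + (φ (WithLp.equiv 2 _ y).1 - (WithLp.equiv 2 _ y).2)
          + ((WithLp.equiv 2 _ y).2 - (WithLp.equiv 2 _ x).2) := by ring
    linarith
  have hcs : (M:ℝ) * a + b ≤ Real.sqrt (1 + (M : ℝ) ^ 2) * Real.sqrt (a ^ 2 + b ^ 2) := by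
    have ha0 : 0 ≤ a := dist_nonneg
    have hb0 : 0 ≤ b := dist_nonneg
    have hM0 : (0:ℝ) ≤ M := M.coe_nonneg
    have h1 : ((M:ℝ) * a + b) ^ 2 ≤ (1 + (M:ℝ)^2) * (a^2 + b^2) := by nlinarith [sq_nonneg ((M:ℝ)*b - a)]
    have h2 : Real.sqrt (1 + (M : ℝ) ^ 2) * Real.sqrt (a ^ 2 + b ^ 2)
        = Real.sqrt ((1 + (M:ℝ)^2) * (a^2 + b^2)) := (Real.sqrt_mul (by positivity) _).symm
    rw [h2]
    calc (M:ℝ) * a + b = Real.sqrt (((M:ℝ)*a + b)^2) := (Real.sqrt_sq (by positivity)).symm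
      _ ≤ Real.sqrt ((1 + (M:ℝ)^2) * (a^2 + b^2)) := Real.sqrt_le_sqrt h1
  rw [hdist] at hdy
  have := (lt_div_iff₀ hsqrt).1 hdy
  nlinarith [key, hcs, this]
end

section
/- Let τ > 0, a > 0, A₀ > 0, p > 1, and let v : (0,∞) → [0,∞) be measurable. Define F(z) = A₀ a z ∫_{τz}^∞ v(s) s^{−2} ds for z > 0. Then (∫₀^∞ F(z)^p dz)^{1/p} ≤ (p A₀ a / ((p+1) τ^{1+1/p})) (∫₀^∞ v(s)^p ds)^{1/p}. -/
open MeasureTheory Set ENNReal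

lemma L1 {b : ℝ} (hb : b < -1) {c : ℝ} (hc : 0 < c) :
    ∫⁻ x in Ioi c, ENNReal.ofReal (x ^ b) = ENNReal.ofReal (c ^ (b + 1) / (-(b + 1))) := by
  rw [← ofReal_integral_eq_lintegral_ofReal (integrableOn_Ioi_rpow_of_lt hb hc)]
  · rw [integral_Ioi_rpow_of_lt hb hc]
    congr 1
    rw [neg_div, ← div_neg]
  · filter_upwards [ae_restrict_mem measurableSet_Ioi] with x hx
    exact Real.rpow_nonneg (le_of_lt (hc.trans hx)) _

lemma L2 {e : ℝ} (he : 0 ≤ e) {M : ℝ} (hM : 0 < M) :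
    ∫⁻ x in Ioo (0:ℝ) M, ENNReal.ofReal (x ^ e) = ENNReal.ofReal (M ^ (e + 1) / (e + 1)) := by
  have hint : IntegrableOn (fun x => x ^ e) (Ioo (0:ℝ) M) := by
    have := (intervalIntegral.intervalIntegrable_rpow (μ := volume) (a := 0) (b := M)
      (r := e) (Or.inl he)).1
    exact this.mono_set Ioo_subset_Ioc_self
  rw [← ofReal_integral_eq_lintegral_ofReal hint]
  · congr 1
    rw [← integral_Ioc_eq_integral_Ioo, ← intervalIntegral.integral_of_le hM.le,
      integral_rpow (Or.inl (by linarith))]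
    rw [Real.zero_rpow (by positivity)]
    ring
  · filter_upwards [ae_restrict_mem measurableSet_Ioo] with x hx
    exact Real.rpow_nonneg hx.1.le _

lemma L3 (τ : ℝ) (hτ : 0 < τ) (f g : ℝ → ℝ≥0∞) (hf : Measurable f) (hg : Measurable g) :
    ∫⁻ z in Ioi (0:ℝ), f z * ∫⁻ s in Ioi (τ * z), g s
      = ∫⁻ s in Ioi (0:ℝ), g s * ∫⁻ z in Ioo (0:ℝ) (s / τ), f z := by
  set S : Set (ℝ × ℝ) := {q : ℝ × ℝ | 0 < q.1 ∧ τ * q.1 < q.2} with hS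
  have hSm : MeasurableSet S := by
    apply MeasurableSet.inter
    · exact measurableSet_lt measurable_const measurable_fst
    · exact measurableSet_lt (measurable_fst.const_mul τ) measurable_snd
  set H : ℝ × ℝ → ℝ≥0∞ := S.indicator (fun q => f q.1 * g q.2) with hH
  have hHm : Measurable H := ((hf.comp measurable_fst).mul (hg.comp measurable_snd)).indicator hSm
  have key : ∫⁻ z, ∫⁻ s, H (z, s) = ∫⁻ s, ∫⁻ z, H (z, s) :=
    lintegral_lintegral_swap (f := fun z s => H (z, s)) hHm.aemeasurable
  have lhs_eq : ∫⁻ z in Ioi (0:ℝ), f z * ∫⁻ s in Ioi (τ * z), g s = ∫⁻ z, ∫⁻ s, H (z, s) := by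
    rw [← lintegral_indicator measurableSet_Ioi]
    apply lintegral_congr
    intro z
    by_cases hz : 0 < z
    · rw [indicator_of_mem (mem_Ioi.mpr hz), ← lintegral_const_mul _ hg,
        ← lintegral_indicator measurableSet_Ioi]
      apply lintegral_congr
      intro s
      by_cases hs : τ * z < s
      · rw [indicator_of_mem (mem_Ioi.mpr hs), hH,
          indicator_of_mem (show (z, s) ∈ S from ⟨hz, hs⟩)]
      · rw [indicator_of_notMem (by simpa using hs), hH,
          indicator_of_notMem (show (z, s) ∉ S from fun h => hs h.2)]
    · rw [indicator_of_notMem (by simpa using hz)]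
      symm
      simp only [hH]
      rw [lintegral_eq_zero_iff]
      · apply Filter.Eventually.of_forall
        intro s
        exact indicator_of_notMem (show (z, s) ∉ S from fun h => hz h.1) _
      · exact hHm.comp (measurable_prodMk_left)
  have rhs_eq : ∫⁻ s, ∫⁻ z, H (z, s) = ∫⁻ s in Ioi (0:ℝ), g s * ∫⁻ z in Ioo (0:ℝ) (s / τ), f z := by
    rw [← lintegral_indicator measurableSet_Ioi]
    apply lintegral_congr
    intro s
    have inner : ∀ s : ℝ, ∫⁻ z, H (z, s) = ∫⁻ z in Ioo (0:ℝ) (s / τ), f z * g s := by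
      intro s
      rw [← lintegral_indicator measurableSet_Ioo]
      apply lintegral_congr
      intro z
      by_cases hz : z ∈ Ioo (0:ℝ) (s / τ)
      · rw [indicator_of_mem hz, hH,
          indicator_of_mem (show (z, s) ∈ S from ⟨hz.1, (lt_div_iff₀' hτ).mp hz.2⟩)]
      · rw [indicator_of_notMem hz, hH, indicator_of_notMem]
        intro h
        exact hz ⟨h.1, (lt_div_iff₀' hτ).mpr h.2⟩
    rw [inner s]
    by_cases hs : 0 < s
    · rw [indicator_of_mem (mem_Ioi.mpr hs), lintegral_mul_const _ hf, mul_comm]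
    · rw [indicator_of_notMem (by simpa using hs),
        Ioo_eq_empty (by rw [not_lt]; exact div_nonpos_of_nonpos_of_nonneg (not_lt.mp hs) hτ.le)]
      simp
  rw [lhs_eq, key, rhs_eq]
/-- The one-dimensional core estimate for Stein's extension operator,
a consequence of Hardy's inequality. -/
theorem stein_core_estimate (τ a A₀ p : ℝ) (hτ : 0 < τ) (ha : 0 < a) (hA₀ : 0 < A₀)
    (hp : 1 < p) (v : ℝ → ℝ) (hv : Measurable v) (hvnn : ∀ s, 0 ≤ v s)
    (F : ℝ → ℝ≥0∞)
    (hF : ∀ z, F z = ENNReal.ofReal (A₀ * a) * ENNReal.ofReal z *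
      ∫⁻ s in Ioi (τ * z), ENNReal.ofReal (v s) * ENNReal.ofReal (s ^ (-2 : ℝ))) :
    (∫⁻ z in Ioi (0:ℝ), F z ^ p) ^ (1 / p)
      ≤ ENNReal.ofReal (p * A₀ * a / ((p + 1) * τ ^ (1 + 1 / p))) *
        (∫⁻ s in Ioi (0:ℝ), ENNReal.ofReal (v s) ^ p) ^ (1 / p) := by
  have hp0 : (0:ℝ) < p := by linarith
  have hp1 : (0:ℝ) < p - 1 := by linarith
  have hp1' : (0:ℝ) < p + 1 := by linarith
  set C : ℝ := A₀ * a with hCdef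
  have hC : 0 < C := mul_pos hA₀ ha
  set q : ℝ := p / (p - 1) with hqdef
  have hq0 : 0 < q := by positivity
  have hpq : p.HolderConjugate q := by
    have := Real.HolderConjugate.conjExponent hp
    rwa [Real.conjExponent] at this
  have hpq' : p / q = p - 1 := by rw [hqdef]; field_simp
  set β : ℝ := (p + 1) / p ^ 2 with hβdef
  have hβ0 : 0 < β := by positivity
  have hβp : β * p = 1 + 1 / p := by rw [hβdef]; field_simp
  set A : ℝ := (β - 2) * q with hAdef
  have hA1 : A + 1 = -((p + 1) / p) := by
    rw [hAdef, hβdef, hqdef]; field_simp; ring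
  have hAlt : A < -1 := by
    have h1 : 0 < (p + 1) / p := by positivity
    linarith [hA1]
  have hD : p + (A + 1) * (p / q) = 1 / p := by
    rw [hA1, hpq']; field_simp; ring
  -- the weight function and RHS-density
  set g : ℝ → ℝ≥0∞ := fun s => ENNReal.ofReal (v s) ^ p * ENNReal.ofReal (s ^ (-(β * p))) with hgdef
  have hvm : Measurable fun s => ENNReal.ofReal (v s) := ENNReal.measurable_ofReal.comp hv
  have hg : Measurable g := (hvm.pow_const p).mul
    (ENNReal.measurable_ofReal.comp (measurable_id.pow_const _))
  set f : ℝ → ℝ≥0∞ := fun z => ENNReal.ofReal z ^ (1/p) with hfdef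
  have hf : Measurable f := (ENNReal.measurable_ofReal.comp measurable_id).pow_const _
  set K1 : ℝ≥0∞ := ENNReal.ofReal (C ^ p) * ENNReal.ofReal (τ ^ ((A+1) * (p/q))) *
    ENNReal.ofReal (((p+1)/p) ^ (-(p/q))) with hK1def
  have hK1top : K1 ≠ ⊤ := by
    rw [hK1def]
    exact ENNReal.mul_ne_top (ENNReal.mul_ne_top ENNReal.ofReal_ne_top ENNReal.ofReal_ne_top)
      ENNReal.ofReal_ne_top
  -- pointwise bound
  have hpt : ∀ z ∈ Ioi (0:ℝ), F z ^ p ≤ K1 * (f z * ∫⁻ s in Ioi (τ * z), g s) := by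
    intro z hz
    rw [mem_Ioi] at hz
    have hτz : 0 < τ * z := mul_pos hτ hz
    set f₁ : ℝ → ℝ≥0∞ := fun s => ENNReal.ofReal (v s) * ENNReal.ofReal (s ^ (-β)) with hf₁def
    set f₂ : ℝ → ℝ≥0∞ := fun s => ENNReal.ofReal (s ^ (β - 2)) with hf₂def
    have hf₁ : Measurable f₁ := hvm.mul (ENNReal.measurable_ofReal.comp (measurable_id.pow_const _))
    have hf₂ : Measurable f₂ := ENNReal.measurable_ofReal.comp (measurable_id.pow_const _)
    -- rewriting the inner integrand as a product
    have step1 : (∫⁻ s in Ioi (τ * z), ENNReal.ofReal (v s) * ENNReal.ofReal (s ^ (-2 : ℝ)))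
        = ∫⁻ s in Ioi (τ * z), (f₁ * f₂) s := by
      apply setLIntegral_congr_fun measurableSet_Ioi
      intro s hs
      have hs0 : 0 < s := hτz.trans hs
      have hsplit : (s : ℝ) ^ (-2 : ℝ) = s ^ (-β) * s ^ (β - 2) := by
        rw [← Real.rpow_add hs0]; congr 1; ring
      simp only [Pi.mul_apply, hf₁def, hf₂def, hsplit,
        ENNReal.ofReal_mul (Real.rpow_nonneg hs0.le _)]
      ring
    -- Hölder
    have step2 : (∫⁻ s in Ioi (τ * z), (f₁ * f₂) s)
        ≤ (∫⁻ s in Ioi (τ * z), f₁ s ^ p) ^ (1/p) * (∫⁻ s in Ioi (τ * z), f₂ s ^ q) ^ (1/q) :=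
      ENNReal.lintegral_mul_le_Lp_mul_Lq _ hpq hf₁.aemeasurable hf₂.aemeasurable
    -- identify the two factors
    have step3 : (∫⁻ s in Ioi (τ * z), f₁ s ^ p) = ∫⁻ s in Ioi (τ * z), g s := by
      apply setLIntegral_congr_fun measurableSet_Ioi
      intro s hs
      have hs0 : 0 < s := hτz.trans hs
      have h1 : ENNReal.ofReal (s ^ (-β)) ^ p = ENNReal.ofReal (s ^ (-(β * p))) := by
        rw [ENNReal.ofReal_rpow_of_pos (Real.rpow_pos_of_pos hs0 _)]
        congr 1
        rw [show -(β * p) = -β * p by ring, Real.rpow_mul hs0.le]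
      simp only [hf₁def, hgdef, ENNReal.mul_rpow_of_nonneg _ _ hp0.le, h1]
    have step4 : (∫⁻ s in Ioi (τ * z), f₂ s ^ q)
        = ENNReal.ofReal ((τ * z) ^ (A + 1) / (-(A + 1))) := by
      rw [← L1 hAlt hτz]
      apply setLIntegral_congr_fun measurableSet_Ioi
      intro s hs
      have hs0 : 0 < s := hτz.trans hs
      simp only [hf₂def]
      rw [ENNReal.ofReal_rpow_of_pos (Real.rpow_pos_of_pos hs0 _)]
      congr 1
      rw [hAdef, Real.rpow_mul hs0.le]
    -- put it together
    have hFz : F z ≤ ENNReal.ofReal C * ENNReal.ofReal z *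
        ((∫⁻ s in Ioi (τ * z), g s) ^ (1/p) *
          ENNReal.ofReal ((τ * z) ^ (A + 1) / (-(A + 1))) ^ (1/q)) := by
      rw [hF z, step1]
      refine mul_le_mul_right ?_ _
      calc (∫⁻ s in Ioi (τ * z), (f₁ * f₂) s)
          ≤ (∫⁻ s in Ioi (τ * z), f₁ s ^ p) ^ (1/p) * (∫⁻ s in Ioi (τ * z), f₂ s ^ q) ^ (1/q) :=
            step2
        _ = (∫⁻ s in Ioi (τ * z), g s) ^ (1/p) *
              ENNReal.ofReal ((τ * z) ^ (A + 1) / (-(A + 1))) ^ (1/q) := by rw [step3, step4]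
    calc F z ^ p ≤ (ENNReal.ofReal C * ENNReal.ofReal z *
        ((∫⁻ s in Ioi (τ * z), g s) ^ (1/p) *
          ENNReal.ofReal ((τ * z) ^ (A + 1) / (-(A + 1))) ^ (1/q))) ^ p :=
          ENNReal.rpow_le_rpow hFz hp0.le
      _ = K1 * (f z * ∫⁻ s in Ioi (τ * z), g s) := by
          set I : ℝ≥0∞ := ∫⁻ s in Ioi (τ * z), g s with hIdef
          have hIp : (I ^ (1/p)) ^ p = I := by
            rw [← ENNReal.rpow_mul, one_div_mul_cancel hp0.ne', ENNReal.rpow_one]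
          have hW0 : ENNReal.ofReal ((τ * z) ^ (A + 1) / (-(A + 1)))
              = ENNReal.ofReal (τ ^ (A+1)) * ENNReal.ofReal (z ^ (A+1)) *
                ENNReal.ofReal (((p+1)/p)⁻¹) := by
            have hre : (τ * z) ^ (A + 1) / (-(A + 1))
                = τ ^ (A+1) * z ^ (A+1) * ((p+1)/p)⁻¹ := by
              rw [Real.mul_rpow hτ.le hz.le, hA1, neg_neg, div_eq_mul_inv]
            rw [hre, ENNReal.ofReal_mul (by positivity), ENNReal.ofReal_mul (by positivity)]
          have hpq0 : (0:ℝ) ≤ p / q := div_nonneg hp0.le hq0.le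
          have hWq : (ENNReal.ofReal ((τ * z) ^ (A + 1) / (-(A + 1))) ^ (1/q)) ^ p
              = ENNReal.ofReal (τ ^ ((A+1) * (p/q))) * ENNReal.ofReal z ^ ((A+1) * (p/q)) *
                ENNReal.ofReal (((p+1)/p) ^ (-(p/q))) := by
            rw [← ENNReal.rpow_mul, show 1/q * p = p/q by ring, hW0,
              ENNReal.mul_rpow_of_nonneg _ _ hpq0, ENNReal.mul_rpow_of_nonneg _ _ hpq0]
            congr 1
            · congr 1
              · rw [ENNReal.ofReal_rpow_of_pos (Real.rpow_pos_of_pos hτ _)]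
                congr 1
                rw [← Real.rpow_mul hτ.le]
              · rw [← ENNReal.ofReal_rpow_of_pos hz, ← ENNReal.rpow_mul]
            · rw [show ((p+1)/p)⁻¹ = ((p+1)/p) ^ (-1 : ℝ) by rw [Real.rpow_neg_one],
                ENNReal.ofReal_rpow_of_pos (Real.rpow_pos_of_pos (by positivity) _)]
              congr 1
              rw [← Real.rpow_mul (by positivity : (0:ℝ) ≤ (p+1)/p)]
              congr 1
              ring
          have hz' : ENNReal.ofReal z ^ p * ENNReal.ofReal z ^ ((A+1) * (p/q))
              = ENNReal.ofReal z ^ (1/p) := by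
            rw [← ENNReal.rpow_add _ _ (ne_of_gt (ENNReal.ofReal_pos.mpr hz))
              ENNReal.ofReal_ne_top, hD]
          calc (ENNReal.ofReal C * ENNReal.ofReal z *
              (I ^ (1/p) * ENNReal.ofReal ((τ * z) ^ (A + 1) / (-(A + 1))) ^ (1/q))) ^ p
              = ENNReal.ofReal C ^ p * ENNReal.ofReal z ^ p *
                ((I ^ (1/p)) ^ p *
                  (ENNReal.ofReal ((τ * z) ^ (A + 1) / (-(A + 1))) ^ (1/q)) ^ p) := by
                rw [ENNReal.mul_rpow_of_nonneg _ _ hp0.le,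
                  ENNReal.mul_rpow_of_nonneg _ _ hp0.le, ENNReal.mul_rpow_of_nonneg _ _ hp0.le]
            _ = ENNReal.ofReal C ^ p *
                  (ENNReal.ofReal z ^ p * ENNReal.ofReal z ^ ((A+1) * (p/q))) *
                  (ENNReal.ofReal (τ ^ ((A+1) * (p/q))) *
                    ENNReal.ofReal (((p+1)/p) ^ (-(p/q))) * I) := by
                rw [hIp, hWq]; ring
            _ = K1 * (f z * I) := by
                rw [hz', hK1def, hfdef, ENNReal.ofReal_rpow_of_pos hC]
                ring
  -- integrate the pointwise bound and apply Tonelli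
  set K2r : ℝ := τ ^ (-(1/p + 1)) * (1/p + 1)⁻¹ with hK2
  have hK2pos : 0 < K2r := by
    rw [hK2]; positivity
  set V : ℝ≥0∞ := ∫⁻ s in Ioi (0:ℝ), ENNReal.ofReal (v s) ^ p with hVdef
  have hmain : (∫⁻ z in Ioi (0:ℝ), F z ^ p) ≤ K1 * ENNReal.ofReal K2r * V := by
    calc ∫⁻ z in Ioi (0:ℝ), F z ^ p
        ≤ ∫⁻ z in Ioi (0:ℝ), K1 * (f z * ∫⁻ s in Ioi (τ * z), g s) := by
          apply lintegral_mono_ae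
          filter_upwards [ae_restrict_mem measurableSet_Ioi] with z hz
          exact hpt z hz
      _ = K1 * ∫⁻ z in Ioi (0:ℝ), f z * ∫⁻ s in Ioi (τ * z), g s :=
          lintegral_const_mul' _ _ hK1top
      _ = K1 * ∫⁻ s in Ioi (0:ℝ), g s * ∫⁻ z in Ioo (0:ℝ) (s/τ), f z := by
          rw [L3 τ hτ f g hf hg]
      _ = K1 * ∫⁻ s in Ioi (0:ℝ), ENNReal.ofReal (v s) ^ p * ENNReal.ofReal K2r := by
          congr 1
          apply setLIntegral_congr_fun measurableSet_Ioi
          intro s hs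
          rw [mem_Ioi] at hs
          have hsτ : 0 < s / τ := div_pos hs hτ
          have hin : ∫⁻ z in Ioo (0:ℝ) (s/τ), f z
              = ENNReal.ofReal ((s/τ) ^ (1/p + 1) / (1/p + 1)) := by
            rw [← L2 (by positivity : (0:ℝ) ≤ 1/p) hsτ]
            apply setLIntegral_congr_fun measurableSet_Ioo
            intro z hz
            exact ENNReal.ofReal_rpow_of_pos hz.1
          beta_reduce
          rw [hin, hgdef]
          simp only []
          rw [mul_assoc, ← ENNReal.ofReal_mul (by positivity)]
          congr 2
          have hsp : (0:ℝ) < s ^ (1/p + 1) := Real.rpow_pos_of_pos hs _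
          rw [Real.div_rpow hs.le hτ.le, hβp, hK2,
            show -(1 + 1/p) = -(1/p + 1) by ring, Real.rpow_neg hs.le,
            Real.rpow_neg hτ.le]
          field_simp
      _ = K1 * (V * ENNReal.ofReal K2r) := by
          rw [hVdef, lintegral_mul_const' _ _ ENNReal.ofReal_ne_top]
      _ = K1 * ENNReal.ofReal K2r * V := by ring
  -- the constant
  set X : ℝ := p * A₀ * a / ((p + 1) * τ ^ (1 + 1 / p)) with hXdef
  have hXpos : 0 < X := by rw [hXdef]; positivity
  have hb : (0:ℝ) < (p+1)/p := by positivity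
  have h1p1 : (1/p + 1 : ℝ) = (p+1)/p := by field_simp; ring
  have hX : X = C * ((p+1)/p)⁻¹ * τ ^ (-(1/p + 1)) := by
    rw [hXdef, hCdef, show -(1/p + 1) = -(1 + 1/p) by ring, Real.rpow_neg hτ.le]
    have hτp : (0:ℝ) < τ ^ (1 + 1/p) := Real.rpow_pos_of_pos hτ _
    field_simp
  have hfac1 : (((p+1)/p:ℝ)⁻¹) ^ p = ((p+1)/p) ^ (-(p/q)) * (1/p + 1)⁻¹ := by
    rw [h1p1, ← Real.rpow_neg_one ((p+1)/p : ℝ), ← Real.rpow_mul hb.le, ← Real.rpow_add hb]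
    congr 1
    rw [hpq']
    ring
  have hfac2 : ((τ : ℝ) ^ (-(1/p + 1))) ^ p = τ ^ ((A+1) * (p/q)) * τ ^ (-(1/p + 1)) := by
    rw [← Real.rpow_mul hτ.le, ← Real.rpow_add hτ]
    congr 1
    rw [hA1, hpq']
    field_simp
    ring
  have hreal : C ^ p * τ ^ ((A+1) * (p/q)) * ((p+1)/p) ^ (-(p/q)) * K2r = X ^ p := by
    have m1 : (C * ((p+1)/p)⁻¹ * τ ^ (-(1/p + 1))) ^ p
        = (C * ((p+1)/p)⁻¹) ^ p * (τ ^ (-(1/p + 1))) ^ p :=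
      Real.mul_rpow (by positivity) (by positivity)
    have m2 : (C * ((p+1)/p:ℝ)⁻¹) ^ p = C ^ p * (((p+1)/p:ℝ)⁻¹) ^ p :=
      Real.mul_rpow hC.le (by positivity)
    rw [hX, m1, m2, hfac1, hfac2, hK2]
    ring
  have hconst : K1 * ENNReal.ofReal K2r = ENNReal.ofReal (X ^ p) := by
    rw [hK1def, ← ENNReal.ofReal_mul (by positivity), ← ENNReal.ofReal_mul (by positivity),
      ← ENNReal.ofReal_mul (by positivity), hreal]
  calc (∫⁻ z in Ioi (0:ℝ), F z ^ p) ^ (1/p)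
      ≤ (K1 * ENNReal.ofReal K2r * V) ^ (1/p) :=
        ENNReal.rpow_le_rpow hmain (by positivity)
    _ = (K1 * ENNReal.ofReal K2r) ^ (1/p) * V ^ (1/p) :=
        ENNReal.mul_rpow_of_nonneg _ _ (by positivity)
    _ = ENNReal.ofReal X * V ^ (1/p) := by
        rw [hconst, ENNReal.ofReal_rpow_of_nonneg (by positivity) (by positivity)]
        congr 1
        rw [← Real.rpow_mul hXpos.le, mul_one_div_cancel hp0.ne', Real.rpow_one]
    _ = ENNReal.ofReal (p * A₀ * a / ((p + 1) * τ ^ (1 + 1 / p))) * V ^ (1/p) := by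
        rw [hXdef]
end
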